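/- Let p be a real pyramid and J = [a,b) a real interval. Set n_J(p) := 1 if J is addable for p, −1 if J is removable for p, and 0 otherwise. Then n_J(p) = δ_{0∈J} − (1_J, p), where δ_{0∈J} = 1 if a ≤ 0 < b and 0 otherwise, and where p is regarded as an integer-valued step function. -/

import Mathlib

noncomputable section
open Function
open scoped Classical

/-- The `ℕ`-valued indicator function of the interval `[a, b)`. -/
def ind (a b : ℝ) : ℝ → ℕ := (Set.Ico a b).indicator fun _ => 1

/-- A real pyramid: a function `p : ℝ → ℕ` vanishing outside a bounded set, maximal at `0`,
nondecreasing on `(-∞, 0]`, nonincreasing on `[0, ∞)`, right-continuous and piecewise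
constant with finitely many discontinuities, and with jumps of size at most 1
(`p₋(x)` is the left limit of `p` at `x`). -/
def IsRealPyramid (p : ℝ → ℕ) : Prop :=
  (∃ M : ℝ, ∀ x : ℝ, M ≤ |x| → p x = 0) ∧
  (∀ x, p x ≤ p 0) ∧
  (∀ ⦃x y : ℝ⦄, x ≤ y → y ≤ 0 → p x ≤ p y) ∧
  (∀ ⦃x y : ℝ⦄, 0 ≤ x → x ≤ y → p y ≤ p x) ∧
  (∀ x, ContinuousWithinAt p (Set.Ici x) x) ∧
  {x : ℝ | ¬ ContinuousAt p x}.Finite ∧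
  (∀ x, |(p x : ℤ) - ((Function.leftLim p x : ℕ) : ℤ)| ≤ 1)

/-- The interval `[a, b)` is addable for `p` if `p + 1_{[a,b)}` is again a real pyramid. -/
def Addable (p : ℝ → ℕ) (a b : ℝ) : Prop := IsRealPyramid (fun x => p x + ind a b x)

/-- The interval `[a, b)` is removable for `p` if `p ≥ 1` on `[a, b)` and `p − 1_{[a,b)}`
is again a real pyramid. -/
def Removable (p : ℝ → ℕ) (a b : ℝ) : Prop :=
  (∀ x ∈ Set.Ico a b, 1 ≤ p x) ∧ IsRealPyramid (fun x => p x - ind a b x)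

/-- `n_J(p)`: `1` if `J = [a,b)` is addable for `p`, `−1` if removable, `0` otherwise. -/
def nJ (p : ℝ → ℕ) (a b : ℝ) : ℤ :=
  if Addable p a b then 1 else if Removable p a b then -1 else 0

/-- The `ℤ`-valued indicator function of the interval `[a, b)`. -/
def indZ (a b : ℝ) : ℝ → ℤ := (Set.Ico a b).indicator fun _ => 1

/-- The Euler-form pairing `⟨f, g⟩ = Σ_x f₋(x) (g₋(x) − g(x))` for integer-valued step
functions, as a finitely supported sum over `x ∈ ℝ`. -/
def pairZ (f g : ℝ → ℤ) : ℤ :=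
  ∑ᶠ x : ℝ, Function.leftLim f x * (Function.leftLim g x - g x)

/-- The symmetrized pairing `(f, g) = ⟨f, g⟩ + ⟨g, f⟩`. -/
def sympairZ (f g : ℝ → ℤ) : ℤ := pairZ f g + pairZ g f

open Filter Set Topology


lemma leftLim_eq_const {β : Type*} [TopologicalSpace β] [DiscreteTopology β] [T2Space β]
    {f : ℝ → β} {x : ℝ} {c : β} (h : ∀ᶠ y in 𝓝[<] x, f y = c) :
    Function.leftLim f x = c :=
  leftLim_eq_of_tendsto
    (by rw [nhds_discrete β]; exact tendsto_pure.2 h)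

lemma eventually_right_eq {β : Type*} [TopologicalSpace β] [DiscreteTopology β]
    {f : ℝ → β} {x : ℝ} (h : ContinuousWithinAt f (Set.Ici x) x) :
    ∀ᶠ y in 𝓝[≥] x, f y = f x := by
  have h2 : Tendsto f (𝓝[≥] x) (𝓝 (f x)) := h
  rw [nhds_discrete β] at h2; exact tendsto_pure.1 h2

lemma eventually_nhds_eq {β : Type*} [TopologicalSpace β] [DiscreteTopology β]
    {f : ℝ → β} {x : ℝ} (h : ContinuousAt f x) :
    ∀ᶠ y in 𝓝 x, f y = f x := by
  have h2 : Tendsto f (𝓝 x) (𝓝 (f x)) := h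
  rw [nhds_discrete β] at h2; exact tendsto_pure.1 h2

lemma pyramid_eventually_left {p : ℝ → ℕ} (hp : IsRealPyramid p) (x : ℝ) :
    ∀ᶠ y in 𝓝[<] x, p y = Function.leftLim p x := by
  obtain ⟨-, hmax, hmono, hanti, -, -, -⟩ := hp
  suffices h : ∃ c, ∀ᶠ y in 𝓝[<] x, p y = c by
    obtain ⟨c, hc⟩ := h
    rwa [leftLim_eq_const hc]
  rcases le_or_gt x 0 with hx | hx
  · have hne : (p '' Set.Ioo (x - 1) x).Nonempty :=
      (Set.nonempty_Ioo.2 (by linarith)).image _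
    have hbdd : BddAbove (p '' Set.Ioo (x - 1) x) :=
      ⟨p 0, fun n hn => by rcases hn with ⟨y, -, rfl⟩; exact hmax y⟩
    obtain ⟨y₀, hy₀, hpy₀⟩ := Nat.sSup_mem hne hbdd
    refine ⟨p y₀, Filter.eventually_of_mem (Ioo_mem_nhdsLT_of_mem ⟨hy₀.2, le_refl x⟩) ?_⟩
    intro y hy
    have h1 : p y₀ ≤ p y := hmono hy.1.le (by linarith [hy.2])
    have h2 : p y ≤ p y₀ := by
      rw [hpy₀]
      exact le_csSup hbdd ⟨y, ⟨by linarith [hy₀.1, hy.1], hy.2⟩, rfl⟩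
    omega
  · set m := max 0 (x - 1) with hm
    have hmx : m < x := max_lt hx (by linarith)
    have hne : (p '' Set.Ioo m x).Nonempty := (Set.nonempty_Ioo.2 hmx).image _
    obtain ⟨y₀, hy₀, hpy₀⟩ := Nat.sInf_mem hne
    refine ⟨p y₀, Filter.eventually_of_mem (Ioo_mem_nhdsLT_of_mem ⟨hy₀.2, le_refl x⟩) ?_⟩
    intro y hy
    have h0 : (0:ℝ) ≤ y₀ := le_trans (le_max_left _ _) hy₀.1.le
    have h1 : p y ≤ p y₀ := hanti h0 hy.1.le
    have h2 : p y₀ ≤ p y := by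
      rw [hpy₀]
      exact Nat.sInf_le ⟨y, ⟨lt_trans hy₀.1 hy.1, hy.2⟩, rfl⟩
    omega

lemma ind_mem_iff_left (a b x : ℝ) :
    ∀ᶠ y in 𝓝[<] x, (y ∈ Set.Ico a b ↔ x ∈ Set.Ioc a b) := by
  rcases le_or_gt x a with h | h
  · refine eventually_of_mem self_mem_nhdsWithin fun y (hy : y ∈ Iio x) => ?_
    simp only [mem_Iio] at hy
    exact iff_of_false (fun hmem => absurd hmem.1 (by linarith))
      (fun hmem => absurd h (not_le.2 hmem.1))
  · rcases le_or_gt x b with h2 | h2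
    · refine eventually_of_mem (Ioo_mem_nhdsLT_of_mem ⟨h, le_refl x⟩) fun y hy => ?_
      exact iff_of_true ⟨hy.1.le, lt_of_lt_of_le hy.2 h2⟩ ⟨h, h2⟩
    · refine eventually_of_mem (Ioo_mem_nhdsLT_of_mem ⟨h2, le_refl x⟩) fun y hy => ?_
      exact iff_of_false (fun hmem => absurd hmem.2 (not_lt.2 hy.1.le))
        (fun hmem => absurd hmem.2 (not_le.2 h2))

lemma ind_mem_iff_right (a b x : ℝ) :
    ∀ᶠ y in 𝓝[≥] x, (y ∈ Set.Ico a b ↔ x ∈ Set.Ico a b) := by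
  rcases lt_or_ge x a with h | h
  · refine eventually_of_mem (Ico_mem_nhdsGE_of_mem ⟨le_refl x, h⟩) fun y hy => ?_
    exact iff_of_false (fun hmem => absurd hmem.1 (not_le.2 hy.2))
      (fun hmem => absurd hmem.1 (not_le.2 h))
  · rcases lt_or_ge x b with h2 | h2
    · refine eventually_of_mem (Ico_mem_nhdsGE_of_mem ⟨le_refl x, h2⟩) fun y hy => ?_
      exact iff_of_true ⟨le_trans h hy.1, hy.2⟩ ⟨h, h2⟩
    · refine eventually_of_mem self_mem_nhdsWithin fun y (hy : y ∈ Ici x) => ?_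
      exact iff_of_false (fun hmem => absurd hmem.2 (not_lt.2 (le_trans h2 hy)))
        (fun hmem => absurd hmem.2 (not_lt.2 h2))

lemma ind_apply (a b y : ℝ) : ind a b y = if y ∈ Set.Ico a b then 1 else 0 := by
  simp [ind, Set.indicator_apply]

lemma ind_eventually_left (a b x : ℝ) :
    ∀ᶠ y in 𝓝[<] x, ind a b y = if x ∈ Set.Ioc a b then 1 else 0 := by
  filter_upwards [ind_mem_iff_left a b x] with y hy
  rw [ind_apply]; exact if_congr hy rfl rfl

lemma ind_eventually_right (a b x : ℝ) :
    ∀ᶠ y in 𝓝[≥] x, ind a b y = ind a b x := by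
  filter_upwards [ind_mem_iff_right a b x] with y hy
  rw [ind_apply, ind_apply]; exact if_congr hy rfl rfl

lemma leftLim_ind (a b x : ℝ) :
    Function.leftLim (ind a b) x = if x ∈ Set.Ioc a b then 1 else 0 :=
  leftLim_eq_const (ind_eventually_left a b x)

lemma exists_left_eq {p : ℝ → ℕ} (hp : IsRealPyramid p) {x m : ℝ} (hm : m < x) :
    ∃ y, m < y ∧ y < x ∧ p y = Function.leftLim p x := by
  have h := (pyramid_eventually_left hp x).and
    (eventually_of_mem (Ioo_mem_nhdsLT_of_mem ⟨hm, le_refl x⟩) (fun y hy => hy))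
  obtain ⟨y, h1, h2⟩ := h.exists
  exact ⟨y, h2.1, h2.2, h1⟩

lemma leftLim_le_self {p : ℝ → ℕ} (hp : IsRealPyramid p) {v : ℝ} (hv : v ≤ 0) :
    Function.leftLim p v ≤ p v := by
  obtain ⟨y, -, hy2, hy3⟩ := exists_left_eq hp (show v - 1 < v by linarith)
  rw [← hy3]; exact hp.2.2.1 hy2.le hv

lemma self_le_leftLim {p : ℝ → ℕ} (hp : IsRealPyramid p) {v : ℝ} (hv : 0 < v) :
    p v ≤ Function.leftLim p v := by
  obtain ⟨y, hy1, hy2, hy3⟩ := exists_left_eq hp (show max 0 (v-1) < v from max_lt hv (by linarith))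
  rw [← hy3]; exact hp.2.2.2.1 (le_trans (le_max_left _ _) hy1.le) hy2.le

lemma le_leftLim_of_lt {p : ℝ → ℕ} (hp : IsRealPyramid p) {x v : ℝ} (hx : x < v) (hv : v ≤ 0) :
    p x ≤ Function.leftLim p v := by
  obtain ⟨y, hy1, hy2, hy3⟩ := exists_left_eq hp hx
  rw [← hy3]; exact hp.2.2.1 hy1.le (by linarith)

lemma leftLim_le_of_lt {p : ℝ → ℕ} (hp : IsRealPyramid p) {x v : ℝ} (h0 : 0 ≤ x) (hx : x < v) :
    Function.leftLim p v ≤ p x := by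
  obtain ⟨y, hy1, hy2, hy3⟩ := exists_left_eq hp hx
  rw [← hy3]; exact hp.2.2.2.1 h0 hy1.le

lemma jump_abs {p : ℝ → ℕ} (hp : IsRealPyramid p) (x : ℝ) :
    -1 ≤ (p x : ℤ) - (Function.leftLim p x : ℕ) ∧ ((p x : ℤ) - (Function.leftLim p x : ℕ)) ≤ 1 :=
  abs_le.1 (hp.2.2.2.2.2.2 x)

lemma leftLim_eq_self_of_continuousAt {p : ℝ → ℕ} (hp : IsRealPyramid p) {x : ℝ}
    (h : ContinuousAt p x) : Function.leftLim p x = p x := by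
  have h1 := pyramid_eventually_left hp x
  have h2 : ∀ᶠ y in 𝓝[<] x, p y = p x :=
    (eventually_nhds_eq h).filter_mono nhdsWithin_le_nhds
  obtain ⟨y, hy1, hy2⟩ := (h1.and h2).exists
  rw [← hy1, hy2]

lemma const_of_locally_const (g : ℝ → ℤ) (u v : ℝ) (huv : u ≤ v)
    (hl : ∀ x ∈ Set.Ioc u v, ∀ᶠ y in 𝓝[<] x, g y = g x)
    (hr : ∀ x ∈ Set.Ico u v, ∀ᶠ y in 𝓝[≥] x, g y = g x) :
    g v = g u := by
  set S := {t : ℝ | t ∈ Set.Icc u v ∧ g t = g u} with hSdef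
  have hu : u ∈ S := ⟨⟨le_refl u, huv⟩, rfl⟩
  have hbdd : BddAbove S := ⟨v, fun t ht => ht.1.2⟩
  have hsu : u ≤ sSup S := le_csSup hbdd hu
  have hsv : sSup S ≤ v := csSup_le ⟨u, hu⟩ (fun t ht => ht.1.2)
  have hgs : g (sSup S) = g u := by
    rcases eq_or_lt_of_le hsu with h | h
    · rw [← h]
    · have hev := hl (sSup S) ⟨h, hsv⟩
      obtain ⟨w, hw, hIoo⟩ := mem_nhdsLT_iff_exists_Ioo_subset.1 hev
      obtain ⟨t, htS, hwt⟩ := exists_lt_of_lt_csSup ⟨u, hu⟩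
        (show max w u < sSup S from max_lt hw h)
      have htle : t ≤ sSup S := le_csSup hbdd htS
      rcases eq_or_lt_of_le htle with h2 | h2
      · rw [← h2]; exact htS.2
      · have : g t = g (sSup S) := hIoo ⟨lt_of_le_of_lt (le_max_left w u) hwt, h2⟩
        rw [← this]; exact htS.2
  have hsS : sSup S ∈ S := ⟨⟨hsu, hsv⟩, hgs⟩
  have hsv' : sSup S = v := by
    by_contra hne
    have hlt : sSup S < v := lt_of_le_of_ne hsv hne
    have hev := hr (sSup S) ⟨hsu, hlt⟩
    obtain ⟨w, hw, hIco⟩ := mem_nhdsGE_iff_exists_Ico_subset.1 hev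
    set t := (sSup S + min w v) / 2 with htdef
    have h1 : sSup S < t := by
      have := lt_min hw hlt
      simp only [htdef]; linarith [lt_min (show sSup S < w from hw) hlt]
    have h2 : t < w := by
      have := lt_min (show sSup S < w from hw) hlt
      have h3 : min w v ≤ w := min_le_left _ _
      simp only [htdef]; linarith
    have h3 : t < v := by
      have := lt_min (show sSup S < w from hw) hlt
      have h4 : min w v ≤ v := min_le_right _ _
      simp only [htdef]; linarith
    have hgt : g t = g (sSup S) := hIco ⟨h1.le, h2⟩
    have htS : t ∈ S := ⟨⟨le_trans hsu h1.le, h3.le⟩, by rw [hgt]; exact hgs⟩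
    exact absurd (le_csSup hbdd htS) (not_le.2 h1)
  rw [← hsv']; exact hgs

lemma telescope {p : ℝ → ℕ} (hp : IsRealPyramid p) (u v : ℝ) (huv : u ≤ v) (T : Finset ℝ)
    (hT : ∀ x : ℝ, x ∈ Set.Ioc u v → ((Function.leftLim p x : ℕ) : ℤ) ≠ (p x : ℤ) → x ∈ T)
    (hT2 : ∀ x ∈ T, x ∈ Set.Ioc u v) :
    (p v : ℤ) - p u = ∑ x ∈ T, ((p x : ℤ) - (Function.leftLim p x : ℕ)) := by
  classical
  set j : ℝ → ℤ := fun x => (p x : ℤ) - ((Function.leftLim p x : ℕ) : ℤ) with hj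
  set g : ℝ → ℤ := fun t => (p t : ℤ) - ∑ x ∈ T, (if x ≤ t then j x else 0) with hg
  have hgu : g u = p u := by
    simp only [hg]
    rw [Finset.sum_eq_zero, sub_zero]
    intro x hx; rw [if_neg]; exact not_le.2 (hT2 x hx).1
  have hgv : g v = (p v : ℤ) - ∑ x ∈ T, j x := by
    simp only [hg]; congr 1
    exact Finset.sum_congr rfl (fun x hx => if_pos (hT2 x hx).2)
  have key : g v = g u := by
    apply const_of_locally_const g u v huv
    · intro t ht
      have h1 := pyramid_eventually_left hp t
      have h2 : ∀ᶠ y in 𝓝[<] t, ∀ x ∈ T, ((x ≤ y) ↔ (x < t)) := by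
        rw [Finset.eventually_all]
        intro x hx
        rcases lt_or_ge x t with hxt | hxt
        · filter_upwards [Ioo_mem_nhdsLT_of_mem (⟨hxt, le_refl t⟩ : t ∈ Set.Ioc x t)] with y hy
          exact iff_of_true hy.1.le hxt
        · filter_upwards [self_mem_nhdsWithin] with y (hy : y ∈ Set.Iio t)
          exact iff_of_false (fun hle => absurd (lt_of_le_of_lt hle hy) (not_lt.2 hxt))
            (not_lt.2 hxt)
      filter_upwards [h1, h2] with y hy1 hy2
      have hsum : ∑ x ∈ T, (if x ≤ y then j x else 0) = ∑ x ∈ T, (if x < t then j x else 0) :=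
        Finset.sum_congr rfl (fun x hx => if_congr (hy2 x hx) rfl rfl)
      have hsplit : ∑ x ∈ T, (if x ≤ t then j x else 0)
          = ∑ x ∈ T, (if x < t then j x else 0) + (if t ∈ T then j t else 0) := by
        have hpt : ∀ x ∈ T, (if x ≤ t then j x else 0)
            = (if x < t then j x else 0) + (if x = t then j x else 0) := by
          intro x hx
          rcases lt_trichotomy x t with h | h | h
          · rw [if_pos h.le, if_pos h, if_neg (ne_of_lt h), add_zero]
          · subst h; rw [if_pos (le_refl x), if_neg (lt_irrefl x), if_pos rfl, zero_add]
          · rw [if_neg (not_le.2 h), if_neg (not_lt.2 h.le), if_neg (ne_of_gt h), add_zero]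
        rw [Finset.sum_congr rfl hpt, Finset.sum_add_distrib, Finset.sum_ite_eq' T t j]
      have hE : (if t ∈ T then j t else 0) = (p t : ℤ) - ((Function.leftLim p t : ℕ) : ℤ) := by
        by_cases htT : t ∈ T
        · rw [if_pos htT]
        · rw [if_neg htT]
          by_cases he : ((Function.leftLim p t : ℕ) : ℤ) = (p t : ℤ)
          · rw [he]; ring
          · exact absurd (hT t ht he) htT
      show (p y : ℤ) - _ = (p t : ℤ) - _
      rw [hy1, hsum, hsplit, hE]
      ring
    · intro t ht
      have h1 := eventually_right_eq (hp.2.2.2.2.1 t)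
      have h2 : ∀ᶠ y in 𝓝[≥] t, ∀ x ∈ T, ((x ≤ y) ↔ (x ≤ t)) := by
        rw [Finset.eventually_all]
        intro x hx
        rcases le_or_gt x t with hxt | hxt
        · filter_upwards [self_mem_nhdsWithin] with y (hy : y ∈ Set.Ici t)
          exact iff_of_true (le_trans hxt hy) hxt
        · filter_upwards [Ico_mem_nhdsGE_of_mem (⟨le_refl t, hxt⟩ : t ∈ Set.Ico t x)] with y hy
          exact iff_of_false (not_le.2 hy.2) (not_le.2 hxt)
      filter_upwards [h1, h2] with y hy1 hy2
      show (p y : ℤ) - _ = (p t : ℤ) - _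
      rw [hy1]
      congr 1
      exact Finset.sum_congr rfl (fun x hx => if_congr (hy2 x hx) rfl rfl)
  rw [hgv, hgu] at key
  linarith [key]

lemma indZ_apply (a b y : ℝ) : indZ a b y = if y ∈ Set.Ico a b then 1 else 0 := by
  simp [indZ, Set.indicator_apply]

lemma leftLim_indZ (a b x : ℝ) :
    Function.leftLim (indZ a b) x = if x ∈ Set.Ioc a b then 1 else 0 :=
  leftLim_eq_const ((ind_mem_iff_left a b x).mono fun y hy => by
    rw [indZ_apply]; exact if_congr hy rfl rfl)

lemma leftLim_cast {p : ℝ → ℕ} (hp : IsRealPyramid p) (x : ℝ) :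
    Function.leftLim (fun y => (p y : ℤ)) x = ((Function.leftLim p x : ℕ) : ℤ) :=
  leftLim_eq_const ((pyramid_eventually_left hp x).mono (fun y hy => by rw [hy]))

lemma jump_set_finite {p : ℝ → ℕ} (hp : IsRealPyramid p) :
    {x : ℝ | ((Function.leftLim p x : ℕ) : ℤ) ≠ (p x : ℤ)}.Finite := by
  apply hp.2.2.2.2.2.1.subset
  intro x hx
  simp only [Set.mem_setOf_eq] at hx ⊢
  intro hcont
  exact hx (by rw [leftLim_eq_self_of_continuousAt hp hcont])

lemma pair_eval1 {p : ℝ → ℕ} (hp : IsRealPyramid p) (a b : ℝ) (hab : a < b) :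
    pairZ (indZ a b) (fun x => (p x : ℤ)) = (p a : ℤ) - (p b : ℤ) := by
  classical
  set T : Finset ℝ := (jump_set_finite hp).toFinset.filter (fun x => x ∈ Set.Ioc a b) with hT
  have hmemT : ∀ x, x ∈ T ↔ (((Function.leftLim p x : ℕ) : ℤ) ≠ (p x : ℤ) ∧ x ∈ Set.Ioc a b) := by
    intro x
    simp [hT, Set.Finite.mem_toFinset]
  rw [pairZ]
  have hsupp : Function.support (fun x => Function.leftLim (indZ a b) x *
      (Function.leftLim (fun y => (p y : ℤ)) x - (p x : ℤ))) ⊆ (T : Set ℝ) := by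
    intro x hx
    simp only [Function.mem_support] at hx
    simp only [Finset.mem_coe]
    rw [hmemT]
    constructor
    · intro he
      apply hx
      rw [leftLim_cast hp, he]
      ring
    · by_contra hne
      apply hx
      rw [leftLim_indZ, if_neg hne]
      ring
  rw [finsum_eq_sum_of_support_subset _ hsupp]
  have hterm : ∀ x ∈ T, Function.leftLim (indZ a b) x *
      (Function.leftLim (fun y => (p y : ℤ)) x - (p x : ℤ))
      = -((p x : ℤ) - ((Function.leftLim p x : ℕ) : ℤ)) := by
    intro x hx
    rw [leftLim_indZ, if_pos ((hmemT x).1 hx).2, leftLim_cast hp]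
    ring
  rw [Finset.sum_congr rfl hterm, Finset.sum_neg_distrib]
  rw [← telescope hp a b hab.le T (fun x hx1 hx2 => (hmemT x).2 ⟨hx2, hx1⟩)
    (fun x hx => ((hmemT x).1 hx).2)]
  ring

lemma pair_eval2 {p : ℝ → ℕ} (hp : IsRealPyramid p) (a b : ℝ) (hab : a < b) :
    pairZ (fun x => (p x : ℤ)) (indZ a b)
      = ((Function.leftLim p b : ℕ) : ℤ) - ((Function.leftLim p a : ℕ) : ℤ) := by
  classical
  rw [pairZ]
  have hsupp : Function.support (fun x => Function.leftLim (fun y => (p y : ℤ)) x *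
      (Function.leftLim (indZ a b) x - indZ a b x)) ⊆ (({a, b} : Finset ℝ) : Set ℝ) := by
    intro x hx
    simp only [Function.mem_support] at hx
    simp only [Finset.coe_insert, Finset.coe_singleton, Set.mem_insert_iff,
      Set.mem_singleton_iff]
    by_contra hne
    push_neg at hne
    apply hx
    have heq : Function.leftLim (indZ a b) x = indZ a b x := by
      rw [leftLim_indZ, indZ_apply]
      by_cases hx1 : x ∈ Set.Ioc a b
      · rw [if_pos hx1, if_pos ⟨hx1.1.le, lt_of_le_of_ne hx1.2 hne.2⟩]
      · rw [if_neg hx1, if_neg]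
        intro hmem
        exact hx1 ⟨lt_of_le_of_ne hmem.1 (Ne.symm hne.1), hmem.2.le⟩
    rw [heq]
    ring
  rw [finsum_eq_sum_of_support_subset _ hsupp, Finset.sum_pair hab.ne]
  rw [leftLim_cast hp, leftLim_cast hp, leftLim_indZ, leftLim_indZ, indZ_apply, indZ_apply]
  have h1 : a ∉ Set.Ioc a b := by simp
  have h2 : a ∈ Set.Ico a b := ⟨le_refl a, hab⟩
  have h3 : b ∈ Set.Ioc a b := ⟨hab, le_refl b⟩
  have h4 : b ∉ Set.Ico a b := by simp
  rw [if_neg h1, if_pos h2, if_pos h3, if_neg h4]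
  ring

lemma sympair_eval {p : ℝ → ℕ} (hp : IsRealPyramid p) (a b : ℝ) (hab : a < b) :
    sympairZ (indZ a b) (fun x => (p x : ℤ))
      = ((p a : ℤ) - ((Function.leftLim p a : ℕ) : ℤ))
        - ((p b : ℤ) - ((Function.leftLim p b : ℕ) : ℤ)) := by
  rw [sympairZ, pair_eval1 hp a b hab, pair_eval2 hp a b hab]
  ring

lemma ind_eventually_nhds {a b x : ℝ} (hxa : x ≠ a) (hxb : x ≠ b) :
    ∀ᶠ y in 𝓝 x, ind a b y = ind a b x := by
  rcases lt_trichotomy x a with h | h | h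
  · filter_upwards [Iio_mem_nhds h] with y hy
    rw [ind_apply, ind_apply, if_neg (fun hm => absurd hm.1 (not_le.2 hy)),
      if_neg (fun hm => absurd hm.1 (not_le.2 h))]
  · exact absurd h hxa
  · rcases lt_trichotomy x b with h2 | h2 | h2
    · filter_upwards [Ioo_mem_nhds h h2] with y hy
      rw [ind_apply, ind_apply, if_pos ⟨hy.1.le, hy.2⟩, if_pos ⟨h.le, h2⟩]
    · exact absurd h2 hxb
    · filter_upwards [Ioi_mem_nhds h2] with y hy
      rw [ind_apply, ind_apply, if_neg (fun hm => absurd hm.2 (not_lt.2 (le_of_lt hy))),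
        if_neg (fun hm => absurd hm.2 (not_lt.2 h2.le))]

lemma leftLim_add_ind {p : ℝ → ℕ} (hp : IsRealPyramid p) (a b x : ℝ) :
    Function.leftLim (fun y => p y + ind a b y) x
      = Function.leftLim p x + (if x ∈ Set.Ioc a b then 1 else 0) :=
  leftLim_eq_const (((pyramid_eventually_left hp x).and (ind_eventually_left a b x)).mono
    fun y hy => by rw [hy.1, hy.2])

lemma leftLim_sub_ind {p : ℝ → ℕ} (hp : IsRealPyramid p) (a b x : ℝ) :
    Function.leftLim (fun y => p y - ind a b y) x
      = Function.leftLim p x - (if x ∈ Set.Ioc a b then 1 else 0) :=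
  leftLim_eq_const (((pyramid_eventually_left hp x).and (ind_eventually_left a b x)).mono
    fun y hy => by rw [hy.1, hy.2])

lemma addable_iff {p : ℝ → ℕ} (hp : IsRealPyramid p) {a b : ℝ} (hab : a < b) :
    Addable p a b ↔
      ((p a : ℤ) - ((Function.leftLim p a : ℕ) : ℤ) = if 0 < a then -1 else 0) ∧
      ((p b : ℤ) - ((Function.leftLim p b : ℕ) : ℤ) = if b ≤ 0 then 1 else 0) := by
  have inda : ind a b a = 1 := by rw [ind_apply, if_pos ⟨le_refl a, hab⟩]
  have indb : ind a b b = 0 := by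
    rw [ind_apply, if_neg (fun hm => absurd hm.2 (lt_irrefl b))]
  have hIoca : a ∉ Set.Ioc a b := fun hm => absurd hm.1 (lt_irrefl a)
  have hIocb : b ∈ Set.Ioc a b := ⟨hab, le_refl b⟩
  have hja := jump_abs hp a
  have hjb := jump_abs hp b
  constructor
  · intro hq
    have hjqa := abs_le.1 (hq.2.2.2.2.2.2 a)
    have hjqb := abs_le.1 (hq.2.2.2.2.2.2 b)
    rw [leftLim_add_ind hp, if_neg hIoca] at hjqa
    rw [leftLim_add_ind hp, if_pos hIocb] at hjqb
    simp only [inda, indb] at hjqa hjqb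
    push_cast at hjqa hjqb
    constructor
    · by_cases ha0 : 0 < a
      · rw [if_pos ha0]
        obtain ⟨y, hy1, hy2, hy3⟩ :=
          exists_left_eq hp (show max 0 (a - 1) < a from max_lt ha0 (by linarith))
        have hy0 : (0:ℝ) ≤ y := le_trans (le_max_left _ _) hy1.le
        have hindy : ind a b y = 0 := by
          rw [ind_apply, if_neg (fun hm => absurd hm.1 (not_le.2 hy2))]
        have hmono := hq.2.2.2.1 hy0 hy2.le
        simp only [hindy, inda] at hmono
        rw [hy3] at hmono
        omega
      · rw [if_neg ha0]
        have hle := leftLim_le_self hp (le_of_not_gt ha0)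
        omega
    · by_cases hb0 : b ≤ 0
      · rw [if_pos hb0]
        obtain ⟨y, hy1, hy2, hy3⟩ :=
          exists_left_eq hp (show max a (b - 1) < b from max_lt hab (by linarith))
        have hya : a < y := lt_of_le_of_lt (le_max_left _ _) hy1
        have hindy : ind a b y = 1 := by rw [ind_apply, if_pos ⟨hya.le, hy2⟩]
        have hmono := hq.2.2.1 hy2.le hb0
        simp only [hindy, indb] at hmono
        rw [hy3] at hmono
        omega
      · rw [if_neg hb0]
        have hle := self_le_leftLim hp (lt_of_not_ge hb0)
        omega
  · rintro ⟨hα, hβ⟩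
    obtain ⟨M, hM⟩ := hp.1
    have hmono : ∀ ⦃x y : ℝ⦄, x ≤ y → y ≤ 0 → p x + ind a b x ≤ p y + ind a b y := by
      intro x y hxy hy0
      have hpm := hp.2.2.1 hxy hy0
      by_cases hx1 : x ∈ Set.Ico a b <;> by_cases hy1 : y ∈ Set.Ico a b
      · rw [ind_apply, ind_apply, if_pos hx1, if_pos hy1]; omega
      · have hby : b ≤ y := by
          by_contra hby
          exact hy1 ⟨le_trans hx1.1 hxy, lt_of_not_ge hby⟩
        have hb0 : b ≤ 0 := le_trans hby hy0
        rw [if_pos hb0] at hβ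
        have h1 : p x ≤ Function.leftLim p b := le_leftLim_of_lt hp hx1.2 hb0
        have h2 : p b ≤ p y := hp.2.2.1 hby hy0
        rw [ind_apply, ind_apply, if_pos hx1, if_neg hy1]
        omega
      · rw [ind_apply, ind_apply, if_neg hx1, if_pos hy1]; omega
      · rw [ind_apply, ind_apply, if_neg hx1, if_neg hy1]; omega
    have hanti : ∀ ⦃x y : ℝ⦄, 0 ≤ x → x ≤ y → p y + ind a b y ≤ p x + ind a b x := by
      intro x y hx0 hxy
      have hpm := hp.2.2.2.1 hx0 hxy
      by_cases hx1 : x ∈ Set.Ico a b <;> by_cases hy1 : y ∈ Set.Ico a b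
      · rw [ind_apply, ind_apply, if_pos hx1, if_pos hy1]; omega
      · rw [ind_apply, ind_apply, if_pos hx1, if_neg hy1]; omega
      · have hxa : x < a := by
          by_contra hxa
          exact hx1 ⟨le_of_not_gt hxa, lt_of_le_of_lt hxy hy1.2⟩
        have ha0 : 0 < a := lt_of_le_of_lt hx0 hxa
        rw [if_pos ha0] at hα
        have h1 : p y ≤ p a := hp.2.2.2.1 ha0.le hy1.1
        have h2 : Function.leftLim p a ≤ p x := leftLim_le_of_lt hp hx0 hxa
        rw [ind_apply, ind_apply, if_neg hx1, if_pos hy1]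
        omega
      · rw [ind_apply, ind_apply, if_neg hx1, if_neg hy1]; omega
    refine ⟨⟨max M (max |a| |b| + 1), fun x hx => ?_⟩, ?_, hmono, hanti, ?_, ?_, ?_⟩
    · have h1 : p x = 0 := hM x (le_trans (le_max_left _ _) hx)
      have h2 : ind a b x = 0 := by
        rw [ind_apply, if_neg]
        intro hm
        have hb1 : x ≤ |b| := le_trans hm.2.le (le_abs_self b)
        have ha1 : -|a| ≤ x := le_trans (neg_abs_le a) hm.1
        have h3 : |x| ≤ max |a| |b| := abs_le.2
          ⟨le_trans (neg_le_neg (le_max_left |a| |b|)) ha1,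
           le_trans hb1 (le_max_right _ _)⟩
        have h4 := le_trans (le_max_right M (max |a| |b| + 1)) hx
        linarith
      simp [h1, h2]
    · intro x
      rcases le_or_gt x 0 with hx0 | hx0
      · exact hmono hx0 (le_refl 0)
      · exact hanti (le_refl 0) hx0.le
    · intro x
      have h1 := eventually_right_eq (hp.2.2.2.2.1 x)
      have h2 := ind_eventually_right a b x
      show Filter.Tendsto _ (𝓝[≥] x) (𝓝 _)
      rw [nhds_discrete ℕ]
      exact tendsto_pure.2 ((h1.and h2).mono fun y hy => by
        simp only []; rw [hy.1, hy.2])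
    · apply (hp.2.2.2.2.2.1.union ((Set.finite_singleton b).insert a)).subset
      intro x hx
      simp only [Set.mem_setOf_eq] at hx
      by_contra hmem
      simp only [Set.mem_union, Set.mem_setOf_eq, Set.mem_insert_iff,
        Set.mem_singleton_iff] at hmem
      push_neg at hmem
      obtain ⟨hcont, hxa, hxb⟩ := hmem
      apply hx
      have h1 := eventually_nhds_eq hcont
      have h2 := ind_eventually_nhds hxa hxb
      show Filter.Tendsto _ (𝓝 x) (𝓝 _)
      rw [nhds_discrete ℕ]
      exact tendsto_pure.2 ((h1.and h2).mono fun y hy => by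
        simp only []; rw [hy.1, hy.2])
    · intro x
      show |((p x + ind a b x : ℕ) : ℤ)
          - ((Function.leftLim (fun y => p y + ind a b y) x : ℕ) : ℤ)| ≤ 1
      rw [leftLim_add_ind hp]
      rcases eq_or_ne x a with rfl | hxa
      · rw [if_neg hIoca, inda, add_zero]
        rw [abs_le]
        push_cast
        split_ifs at hα <;> constructor <;> omega
      · rcases eq_or_ne x b with rfl | hxb
        · rw [if_pos hIocb, indb, add_zero]
          rw [abs_le]
          push_cast
          split_ifs at hβ <;> constructor <;> omega
        · have heq : (if x ∈ Set.Ioc a b then 1 else 0) = ind a b x := by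
            rw [ind_apply]
            by_cases hx1 : x ∈ Set.Ioc a b
            · rw [if_pos hx1, if_pos ⟨hx1.1.le, lt_of_le_of_ne hx1.2 hxb⟩]
            · rw [if_neg hx1, if_neg (fun hm => hx1 ⟨lt_of_le_of_ne hm.1 (Ne.symm hxa), hm.2.le⟩)]
          rw [heq]
          have hjx := abs_le.1 (hp.2.2.2.2.2.2 x)
          rw [abs_le]
          push_cast
          constructor <;> omega

lemma removable_iff {p : ℝ → ℕ} (hp : IsRealPyramid p) {a b : ℝ} (hab : a < b) :
    Removable p a b ↔
      ((p a : ℤ) - ((Function.leftLim p a : ℕ) : ℤ) = if a ≤ 0 then 1 else 0) ∧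
      ((p b : ℤ) - ((Function.leftLim p b : ℕ) : ℤ) = if 0 < b then -1 else 0) := by
  have inda : ind a b a = 1 := by rw [ind_apply, if_pos ⟨le_refl a, hab⟩]
  have indb : ind a b b = 0 := by
    rw [ind_apply, if_neg (fun hm => absurd hm.2 (lt_irrefl b))]
  have hIoca : a ∉ Set.Ioc a b := fun hm => absurd hm.1 (lt_irrefl a)
  have hIocb : b ∈ Set.Ioc a b := ⟨hab, le_refl b⟩
  have hja := jump_abs hp a
  have hjb := jump_abs hp b
  constructor
  · rintro ⟨hpos, hq⟩
    have hpa1 : 1 ≤ p a := hpos a ⟨le_refl a, hab⟩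
    -- left limit at b is ≥ 1
    have hLb1 : 1 ≤ Function.leftLim p b := by
      obtain ⟨y, hy1, hy2, hy3⟩ :=
        exists_left_eq hp (show max a (b - 1) < b from max_lt hab (by linarith))
      rw [← hy3]
      exact hpos y ⟨(lt_of_le_of_lt (le_max_left _ _) hy1).le, hy2⟩
    have hjqa := abs_le.1 (hq.2.2.2.2.2.2 a)
    have hjqb := abs_le.1 (hq.2.2.2.2.2.2 b)
    rw [leftLim_sub_ind hp, if_neg hIoca, Nat.sub_zero] at hjqa
    rw [leftLim_sub_ind hp, if_pos hIocb] at hjqb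
    simp only [inda, indb, Nat.sub_zero] at hjqa hjqb
    constructor
    · by_cases ha0 : a ≤ 0
      · rw [if_pos ha0]
        obtain ⟨y, hy1, hy2, hy3⟩ := exists_left_eq hp (show a - 1 < a by linarith)
        have hindy : ind a b y = 0 := by
          rw [ind_apply, if_neg (fun hm => absurd hm.1 (not_le.2 hy2))]
        have hmono := hq.2.2.1 hy2.le ha0
        simp only [hindy, Nat.sub_zero, inda] at hmono
        rw [hy3] at hmono
        omega
      · rw [if_neg ha0]
        have hle := self_le_leftLim hp (lt_of_not_ge ha0)
        omega
    · by_cases hb0 : 0 < b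
      · rw [if_pos hb0]
        obtain ⟨y, hy1, hy2, hy3⟩ := exists_left_eq hp
          (show max a (max 0 (b - 1)) < b from
            max_lt hab (max_lt hb0 (by linarith)))
        have hy0 : (0:ℝ) ≤ y := le_trans (le_trans (le_max_left _ _) (le_max_right a _)) hy1.le
        have hya : a < y := lt_of_le_of_lt (le_max_left _ _) hy1
        have hindy : ind a b y = 1 := by rw [ind_apply, if_pos ⟨hya.le, hy2⟩]
        have hanti := hq.2.2.2.1 hy0 hy2.le
        simp only [hindy, indb, Nat.sub_zero] at hanti
        rw [hy3] at hanti
        omega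
      · rw [if_neg hb0]
        have hle := leftLim_le_self hp (le_of_not_gt hb0)
        omega
  · rintro ⟨hα, hβ⟩
    have hpos : ∀ x ∈ Set.Ico a b, 1 ≤ p x := by
      intro x hx
      rcases le_or_gt x 0 with hx0 | hx0
      · have ha0 : a ≤ 0 := le_trans hx.1 hx0
        rw [if_pos ha0] at hα
        have h1 : p a ≤ p x := hp.2.2.1 hx.1 hx0
        omega
      · have hb0 : 0 < b := lt_trans hx0 hx.2
        rw [if_pos hb0] at hβ
        have h1 : Function.leftLim p b ≤ p x := leftLim_le_of_lt hp hx0.le hx.2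
        omega
    refine ⟨hpos, ?_⟩
    obtain ⟨M, hM⟩ := hp.1
    have hmono : ∀ ⦃x y : ℝ⦄, x ≤ y → y ≤ 0 → p x - ind a b x ≤ p y - ind a b y := by
      intro x y hxy hy0
      have hpm := hp.2.2.1 hxy hy0
      by_cases hx1 : x ∈ Set.Ico a b <;> by_cases hy1 : y ∈ Set.Ico a b
      · rw [ind_apply, ind_apply, if_pos hx1, if_pos hy1]; omega
      · rw [ind_apply, ind_apply, if_pos hx1, if_neg hy1]; omega
      · have hxa : x < a := by
          by_contra hxa
          exact hx1 ⟨le_of_not_gt hxa, lt_of_le_of_lt hxy hy1.2⟩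
        have ha0 : a ≤ 0 := le_trans hy1.1 hy0
        rw [if_pos ha0] at hα
        have h1 : p x ≤ Function.leftLim p a := le_leftLim_of_lt hp hxa ha0
        have h2 : p a ≤ p y := hp.2.2.1 hy1.1 hy0
        rw [ind_apply, ind_apply, if_neg hx1, if_pos hy1]
        omega
      · rw [ind_apply, ind_apply, if_neg hx1, if_neg hy1]; omega
    have hanti : ∀ ⦃x y : ℝ⦄, 0 ≤ x → x ≤ y → p y - ind a b y ≤ p x - ind a b x := by
      intro x y hx0 hxy
      have hpm := hp.2.2.2.1 hx0 hxy
      by_cases hx1 : x ∈ Set.Ico a b <;> by_cases hy1 : y ∈ Set.Ico a b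
      · rw [ind_apply, ind_apply, if_pos hx1, if_pos hy1]; omega
      · have hby : b ≤ y := by
          by_contra hby
          exact hy1 ⟨le_trans hx1.1 hxy, lt_of_not_ge hby⟩
        have hb0 : 0 < b := lt_of_le_of_lt hx0 hx1.2
        rw [if_pos hb0] at hβ
        have h1 : p y ≤ p b := hp.2.2.2.1 hb0.le hby
        have h2 : Function.leftLim p b ≤ p x := leftLim_le_of_lt hp hx0 hx1.2
        rw [ind_apply, ind_apply, if_pos hx1, if_neg hy1]
        omega
      · rw [ind_apply, ind_apply, if_neg hx1, if_pos hy1]; omega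
      · rw [ind_apply, ind_apply, if_neg hx1, if_neg hy1]; omega
    refine ⟨⟨M, fun x hx => ?_⟩, ?_, hmono, hanti, ?_, ?_, ?_⟩
    · have h1 : p x = 0 := hM x hx
      show p x - ind a b x = 0
      omega
    · intro x
      rcases le_or_gt x 0 with hx0 | hx0
      · exact hmono hx0 (le_refl 0)
      · exact hanti (le_refl 0) hx0.le
    · intro x
      have h1 := eventually_right_eq (hp.2.2.2.2.1 x)
      have h2 := ind_eventually_right a b x
      show Filter.Tendsto _ (𝓝[≥] x) (𝓝 _)
      rw [nhds_discrete ℕ]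
      exact tendsto_pure.2 ((h1.and h2).mono fun y hy => by
        simp only []; rw [hy.1, hy.2])
    · apply (hp.2.2.2.2.2.1.union ((Set.finite_singleton b).insert a)).subset
      intro x hx
      simp only [Set.mem_setOf_eq] at hx
      by_contra hmem
      simp only [Set.mem_union, Set.mem_setOf_eq, Set.mem_insert_iff,
        Set.mem_singleton_iff] at hmem
      push_neg at hmem
      obtain ⟨hcont, hxa, hxb⟩ := hmem
      apply hx
      have h1 := eventually_nhds_eq hcont
      have h2 := ind_eventually_nhds hxa hxb
      show Filter.Tendsto _ (𝓝 x) (𝓝 _)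
      rw [nhds_discrete ℕ]
      exact tendsto_pure.2 ((h1.and h2).mono fun y hy => by
        simp only []; rw [hy.1, hy.2])
    · intro x
      show |((p x - ind a b x : ℕ) : ℤ)
          - ((Function.leftLim (fun y => p y - ind a b y) x : ℕ) : ℤ)| ≤ 1
      rw [leftLim_sub_ind hp]
      rcases eq_or_ne x a with rfl | hxa
      · rw [if_neg hIoca, inda, Nat.sub_zero]
        rw [abs_le]
        split_ifs at hα <;> constructor <;> omega
      · rcases eq_or_ne x b with rfl | hxb
        · rw [if_pos hIocb, indb, Nat.sub_zero]
          rw [abs_le]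
          split_ifs at hβ <;> constructor <;> omega
        · have heq : (if x ∈ Set.Ioc a b then 1 else 0) = ind a b x := by
            rw [ind_apply]
            by_cases hx1 : x ∈ Set.Ioc a b
            · rw [if_pos hx1, if_pos ⟨hx1.1.le, lt_of_le_of_ne hx1.2 hxb⟩]
            · rw [if_neg hx1, if_neg (fun hm => hx1 ⟨lt_of_le_of_ne hm.1 (Ne.symm hxa), hm.2.le⟩)]
          rw [heq]
          have hjx := abs_le.1 (hp.2.2.2.2.2.2 x)
          have hc : ind a b x = 0 ∨ ind a b x = 1 := by
            rw [ind_apply]; split_ifs <;> simp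
          rw [abs_le]
          rcases hc with hc | hc <;> rw [hc] <;> constructor <;> omega


/-- `n_J(p) = δ_{0 ∈ J} − (1_J, p)` for any real pyramid `p` and real
interval `J = [a, b)`. -/
theorem nJ_eq_delta_sub_pairing (p : ℝ → ℕ) (hp : IsRealPyramid p) (a b : ℝ) (hab : a < b) :
    nJ p a b =
      (if a ≤ 0 ∧ 0 < b then 1 else 0) - sympairZ (indZ a b) (fun x => (p x : ℤ)) := by
  have hA := addable_iff hp hab
  have hR := removable_iff hp hab
  rw [sympair_eval hp a b hab, nJ, if_congr hA rfl (if_congr hR rfl rfl)]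
  have hja := jump_abs hp a
  have hjb := jump_abs hp b
  rcases le_or_gt a 0 with ha | ha <;> rcases lt_or_ge 0 b with hb | hb
  · have h1 : Function.leftLim p a ≤ p a := leftLim_le_self hp ha
    have h2 : p b ≤ Function.leftLim p b := self_le_leftLim hp hb
    have hδ : (if a ≤ 0 ∧ 0 < b then (1:ℤ) else 0) = 1 := if_pos ⟨ha, hb⟩
    rw [hδ]
    simp only [if_neg (not_lt.2 ha), if_pos ha, if_pos hb, if_neg (not_le.2 hb)]
    split_ifs with h3 h4 <;> omega
  · have h1 : Function.leftLim p a ≤ p a := leftLim_le_self hp ha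
    have h2 : Function.leftLim p b ≤ p b := leftLim_le_self hp hb
    have hδ : (if a ≤ 0 ∧ 0 < b then (1:ℤ) else 0) = 0 :=
      if_neg (fun hm => absurd hm.2 (not_lt.2 hb))
    rw [hδ]
    simp only [if_neg (not_lt.2 ha), if_pos ha, if_pos hb, if_neg (not_lt.2 hb)]
    split_ifs with h3 h4 <;> omega
  · have h1 : p a ≤ Function.leftLim p a := self_le_leftLim hp ha
    have h2 : p b ≤ Function.leftLim p b := self_le_leftLim hp hb
    have hδ : (if a ≤ 0 ∧ 0 < b then (1:ℤ) else 0) = 0 :=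
      if_neg (fun hm => absurd hm.1 (not_le.2 ha))
    rw [hδ]
    simp only [if_pos ha, if_neg (not_le.2 ha), if_pos hb, if_neg (not_le.2 hb)]
    split_ifs with h3 h4 <;> omega
  · exact absurd (lt_trans ha hab) (not_lt.2 hb)
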